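/- For the hypergraph product matrix H_X = [A⊗I | I⊗Bᵀ], given a layer decomposition of A into k layers A_0,…,A_{k-1} and of Bᵀ into k layers B_0,…,B_{k-1}, the sets L_i = {(a,b) : ∃j, a ∈ A_j and b ∈ B_{(j+i) mod k}} for i = 0,…,k-1 form a layer decomposition of H_X into k layers; i.e., any two distinct rows of H_X in the same L_i have disjoint supports. -/
import Mathlib


/-- The cyclic-shift construction L_i = {(a,b) : ∃ j, a ∈ A_j, b ∈ B_{j+i}} turns
layer decompositions of A and Bᵀ into a layer decomposition of
H_X = [A⊗I | I⊗Bᵀ] into k layers. -/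
theorem hgp_layer_decomposition (mA nA mB nB k : ℕ) [NeZero k]
    (A : Fin mA → Fin nA → ZMod 2) (Bt : Fin mB → Fin nB → ZMod 2)
    (LA : Fin k → Set (Fin mA)) (LB : Fin k → Set (Fin mB))
    (hpartA : ∀ a, ∃! j, a ∈ LA j)
    (hlayerA : ∀ j, ∀ a ∈ LA j, ∀ a' ∈ LA j, a ≠ a' → ∀ col, A a col = 0 ∨ A a' col = 0)
    (hpartB : ∀ b, ∃! j, b ∈ LB j)
    (hlayerB : ∀ j, ∀ b ∈ LB j, ∀ b' ∈ LB j, b ≠ b' → ∀ col, Bt b col = 0 ∨ Bt b' col = 0)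
    (HX : Fin mA × Fin mB → (Fin nA × Fin mB ⊕ Fin mA × Fin nB) → ZMod 2)
    (hHX : ∀ a b col, HX (a, b) col =
      Sum.elim (fun p : Fin nA × Fin mB => if p.2 = b then A a p.1 else 0)
               (fun p : Fin mA × Fin nB => if p.1 = a then Bt b p.2 else 0) col)
    (L : Fin k → Set (Fin mA × Fin mB))
    (hL : ∀ i p, p ∈ L i ↔ ∃ j, p.1 ∈ LA j ∧ p.2 ∈ LB (j + i)) :
    (∀ p, ∃! i, p ∈ L i) ∧
    (∀ i, ∀ p ∈ L i, ∀ q ∈ L i, p ≠ q → ∀ col, HX p col = 0 ∨ HX q col = 0) := by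
  constructor
  · intro p
    obtain ⟨jA, hjA, huA⟩ := hpartA p.1
    obtain ⟨jB, hjB, huB⟩ := hpartB p.2
    refine ⟨jB - jA, ?_, ?_⟩
    · exact (hL _ _).mpr ⟨jA, hjA, by rwa [add_sub_cancel]⟩
    · intro i hi
      obtain ⟨j, hj1, hj2⟩ := (hL _ _).mp hi
      have h1 : j = jA := huA j hj1
      have h2 : j + i = jB := huB _ hj2
      subst h1
      rw [← h2, add_sub_cancel_left]
  · rintro i ⟨a, b⟩ hp ⟨a', b'⟩ hq hne col
    obtain ⟨j, hj1, hj2⟩ := (hL _ _).mp hp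
    obtain ⟨j', hj'1, hj'2⟩ := (hL _ _).mp hq
    rw [hHX, hHX]
    rcases col with ⟨c, d⟩ | ⟨c, d⟩
    · simp only [Sum.elim_inl]
      by_cases hb : d = b
      · by_cases hb' : d = b'
        · have hbb : b = b' := hb ▸ hb'
          obtain ⟨jb, _, hub⟩ := hpartB b
          have e1 : j + i = jb := hub _ hj2
          have e2 : j' + i = jb := hub _ (hbb ▸ hj'2)
          have hjj : j = j' := by
            have := e1.trans e2.symm
            exact add_right_cancel this
          have hane : a ≠ a' := by
            intro h; exact hne (by rw [h, hbb])
          have := hlayerA j a hj1 a' (hjj ▸ hj'1) hane c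
          simp only [if_pos hb, if_pos hb']
          exact this
        · right; simp [hb']
      · left; simp [hb]
    · simp only [Sum.elim_inr]
      by_cases ha : c = a
      · by_cases ha' : c = a'
        · have haa : a = a' := ha ▸ ha'
          obtain ⟨ja, _, hua⟩ := hpartA a
          have e1 : j = ja := hua _ hj1
          have e2 : j' = ja := hua _ (haa ▸ hj'1)
          have hjj : j = j' := e1.trans e2.symm
          have hbne : b ≠ b' := by
            intro h; exact hne (by rw [haa, h])
          have := hlayerB (j + i) b hj2 b' (by rw [hjj]; exact hj'2) hbne d
          simp only [if_pos ha, if_pos ha']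
          exact this
        · right; simp [ha']
      · left; simp [ha]
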